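/- For any inner function u, the adjoint of the dual compressed shift satisfies D_u^* f = conj(z)·f − g(0)·C_u k_0^u for f ∈ K_u^⊥, where g = P^+(conj(u) f) ∈ H^2, C_u h = u·conj(z h), and k_0^u = 1 − conj(u(0)) u. In particular D_u^* restricted to conj(H^2_0) is multiplication by conj(z), so D_u^* maps conj(H^2_0) into conj(H^2_0). -/

import Mathlib

open MeasureTheory Complex AddCircle

noncomputable section

namespace Paper

/-- The period `2π`. -/
abbrev T : ℝ := 2 * Real.pi

instance : Fact (0 < T) := ⟨by positivity⟩

/-- Normalized Lebesgue (Haar) measure on the circle. -/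
abbrev μ : Measure (AddCircle T) := haarAddCircle

/-- The space `L²(𝕋, dm)`. -/
abbrev L2 : Type := Lp ℂ 2 μ

lemma memLp_mul {u : AddCircle T → ℂ} (hm : AEStronglyMeasurable u μ)
    (hb : ∀ᵐ x ∂μ, ‖u x‖ ≤ 1) (f : L2) :
    MemLp (fun x => u x * (f : AddCircle T → ℂ) x) 2 μ := by
  refine (Lp.memLp f).of_le (hm.mul (Lp.aestronglyMeasurable f)) ?_
  filter_upwards [hb] with x hx
  calc ‖u x * (f : AddCircle T → ℂ) x‖ = ‖u x‖ * ‖(f : AddCircle T → ℂ) x‖ := norm_mul _ _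
    _ ≤ 1 * ‖(f : AddCircle T → ℂ) x‖ := by gcongr
    _ = ‖(f : AddCircle T → ℂ) x‖ := one_mul _

/-- Multiplication by a measurable function bounded by `1`, as a bounded operator on `L²`. -/
def mulCLM (u : AddCircle T → ℂ) (hm : AEStronglyMeasurable u μ)
    (hb : ∀ᵐ x ∂μ, ‖u x‖ ≤ 1) : L2 →L[ℂ] L2 :=
  LinearMap.mkContinuous
    { toFun := fun f => (memLp_mul hm hb f).toLp _
      map_add' := fun f g => by
        show MemLp.toLp _ (memLp_mul hm hb (f + g)) = _
        have h : (fun x => u x * ((f + g : L2) : AddCircle T → ℂ) x)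
            =ᵐ[μ] (fun x => u x * (f : AddCircle T → ℂ) x)
              + (fun x => u x * (g : AddCircle T → ℂ) x) := by
          filter_upwards [Lp.coeFn_add f g] with x hx
          simp only [Pi.add_apply, hx, mul_add]
        rw [MemLp.toLp_congr (memLp_mul hm hb (f + g))
          ((memLp_mul hm hb f).add (memLp_mul hm hb g)) h, MemLp.toLp_add]
      map_smul' := fun c f => by
        have h : (fun x => u x * ((c • f : L2) : AddCircle T → ℂ) x)
            =ᵐ[μ] c • (fun x => u x * (f : AddCircle T → ℂ) x) := by
          filter_upwards [Lp.coeFn_smul c f] with x hx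
          simp only [Pi.smul_apply, hx, smul_eq_mul]
          ring
        simp only [RingHom.id_apply]
        rw [MemLp.toLp_congr (memLp_mul hm hb (c • f))
          ((memLp_mul hm hb f).const_smul c) h, MemLp.toLp_const_smul] }
    1
    (fun f => by
      simp only [LinearMap.coe_mk, AddHom.coe_mk, one_mul]
      rw [Lp.norm_toLp]
      have h1 : eLpNorm (fun x => u x * (f : AddCircle T → ℂ) x) 2 μ
          ≤ eLpNorm (f : AddCircle T → ℂ) 2 μ := by
        refine eLpNorm_mono_ae ?_
        filter_upwards [hb] with x hx
        calc ‖u x * (f : AddCircle T → ℂ) x‖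
            = ‖u x‖ * ‖(f : AddCircle T → ℂ) x‖ := norm_mul _ _
          _ ≤ 1 * ‖(f : AddCircle T → ℂ) x‖ := by gcongr
          _ = ‖(f : AddCircle T → ℂ) x‖ := one_mul _
      calc (eLpNorm (fun x => u x * (f : AddCircle T → ℂ) x) 2 μ).toReal
          ≤ (eLpNorm (f : AddCircle T → ℂ) 2 μ).toReal :=
            ENNReal.toReal_mono (Lp.eLpNorm_ne_top f) h1
        _ = ‖f‖ := (Lp.norm_def f).symm)

lemma memLp_conj (f : L2) :
    MemLp (fun x => (starRingEnd ℂ) ((f : AddCircle T → ℂ) x)) 2 μ := by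
  refine (Lp.memLp f).of_le ?_ ?_
  · exact Complex.continuous_conj.comp_aestronglyMeasurable (Lp.aestronglyMeasurable f)
  · filter_upwards with x
    simp

/-- Complex conjugation on `L²`. -/
def conjL2 (f : L2) : L2 := (memLp_conj f).toLp _

/-- The independent variable `z = e^{iθ}` as a function on the circle. -/
def zfun : AddCircle T → ℂ := fun x => fourier 1 x

lemma zfun_meas : AEStronglyMeasurable zfun μ :=
  ((map_continuous (fourier (T := T) 1)).aestronglyMeasurable)

lemma zfun_norm : ∀ᵐ x ∂μ, ‖zfun x‖ ≤ 1 := by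
  filter_upwards with x
  simp [zfun, Circle.norm_coe]

/-- Multiplication by `z` (the bilateral shift `M` on `L²`). -/
def Mz : L2 →L[ℂ] L2 := mulCLM zfun zfun_meas zfun_norm

/-- Multiplication by `conj z`. -/
def Mzbar : L2 →L[ℂ] L2 :=
  mulCLM (fun x => (starRingEnd ℂ) (zfun x))
    (Complex.continuous_conj.comp_aestronglyMeasurable zfun_meas)
    (by filter_upwards with x; simp [zfun, Circle.norm_coe])

/-- The Hardy space `H² = {f ∈ L² : f̂(n) = 0 for all n < 0}`. -/
def H2 : Submodule ℂ L2 where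
  carrier := {f | ∀ n : ℤ, n < 0 → fourierBasis.repr f n = 0}
  add_mem' := by
    intro f g hf hg n hn
    simp [map_add, hf n hn, hg n hn]
  zero_mem' := by intro n hn; simp
  smul_mem' := by
    intro c f hf n hn
    simp [_root_.map_smul, hf n hn]

lemma continuous_coeff (n : ℤ) :
    Continuous fun f : L2 => fourierBasis.repr f n := by
  rw [Metric.continuous_iff]
  intro f ε hε
  refine ⟨ε, hε, fun g hg => ?_⟩
  have h1 : fourierBasis.repr g n - fourierBasis.repr f n = fourierBasis.repr (g - f) n := by
    simp [map_sub]
  have h2 : ‖fourierBasis.repr (g - f) n‖ ≤ ‖fourierBasis.repr (g - f)‖ :=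
    lp.norm_apply_le_norm (by norm_num) _ n
  have h3 : ‖fourierBasis.repr (g - f)‖ = ‖g - f‖ :=
    fourierBasis.repr.norm_map _
  calc dist (fourierBasis.repr g n) (fourierBasis.repr f n)
      = ‖fourierBasis.repr (g - f) n‖ := by rw [dist_eq_norm, h1]
    _ ≤ ‖g - f‖ := by rw [← h3]; exact h2
    _ = dist g f := (dist_eq_norm g f).symm
    _ < ε := hg

lemma H2_isClosed : IsClosed (H2 : Set L2) := by
  have : (H2 : Set L2) =
      ⋂ n ∈ {m : ℤ | m < 0}, {f : L2 | fourierBasis.repr f n = 0} := by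
    ext f
    simp only [Set.mem_iInter, Set.mem_setOf_eq]
    rfl
  rw [this]
  exact isClosed_biInter fun n _ => isClosed_eq (continuous_coeff n) continuous_const

instance : CompleteSpace H2 := H2_isClosed.completeSpace_coe

/-- The Riesz projection `P⁺` of `L²` onto `H²`. -/
def Pp : L2 →L[ℂ] L2 := H2.subtypeL ∘L Submodule.orthogonalProjectionOnto H2

/-- The projection `P⁻ = I − P⁺` of `L²` onto `conj(H²₀)`. -/
def Pm : L2 →L[ℂ] L2 := ContinuousLinearMap.id ℂ L2 - Pp

/-- `conj(H²₀) = {f ∈ L² : f̂(n) = 0 for all n ≥ 0}`, the orthogonal complement of `H²`. -/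
def Hm : Submodule ℂ L2 where
  carrier := {f | ∀ n : ℤ, 0 ≤ n → fourierBasis.repr f n = 0}
  add_mem' := by
    intro f g hf hg n hn
    simp [map_add, hf n hn, hg n hn]
  zero_mem' := by intro n hn; simp
  smul_mem' := by
    intro c f hf n hn
    simp [_root_.map_smul, hf n hn]

/-- The constant function `1` as an element of `L²`. -/
def oneL2 : L2 := (memLp_const (1 : ℂ)).toLp _

/-- An inner function: a bounded measurable unimodular function on the circle whose
negative Fourier coefficients vanish. -/
structure InnerData where
  u : AddCircle T → ℂ
  meas : AEStronglyMeasurable u μ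
  unim : ∀ᵐ x ∂μ, ‖u x‖ = 1
  anal : ∀ n : ℤ, n < 0 → fourierCoeff u n = 0

namespace InnerData

variable (U : InnerData)

lemma bd : ∀ᵐ x ∂μ, ‖U.u x‖ ≤ 1 := by
  filter_upwards [U.unim] with x hx
  rw [hx]

/-- Multiplication by `u`: the operator `M_u` on `L²`. -/
def M : L2 →L[ℂ] L2 := mulCLM U.u U.meas U.bd

/-- Multiplication by `conj u`: the operator `M_{conj u}` on `L²`. -/
def Mc : L2 →L[ℂ] L2 :=
  mulCLM (fun x => (starRingEnd ℂ) (U.u x))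
    (Complex.continuous_conj.comp_aestronglyMeasurable U.meas)
    (by filter_upwards [U.bd] with x hx; simpa using hx)

/-- `u` as an element of `L²`. -/
def toL2 : L2 :=
  (memLp_top_of_bound U.meas 1 U.bd |>.mono_exponent le_top).toLp _

/-- The value `u(0)` of (the analytic extension of) `u` at the origin, i.e. the mean of `u`. -/
def a0 : ℂ := fourierCoeff U.u 0

/-- The subspace `uH²`. -/
def uH2 : Submodule ℂ L2 := Submodule.map (U.M : L2 →ₗ[ℂ] L2) H2

/-- The model space `K_u = H² ∩ (uH²)ᗮ`. -/
def Ku : Submodule ℂ L2 := H2 ⊓ (U.uH2)ᗮ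

lemma Ku_isClosed : IsClosed (U.Ku : Set L2) := by
  have : (U.Ku : Set L2) = (H2 : Set L2) ∩ ((U.uH2)ᗮ : Set L2) := rfl
  rw [this]
  exact H2_isClosed.inter (U.uH2).isClosed_orthogonal

instance : CompleteSpace U.Ku := U.Ku_isClosed.completeSpace_coe

/-- `K_u^⊥`, the orthogonal complement of the model space in `L²`. -/
def KP : Submodule ℂ L2 := (U.Ku)ᗮ

instance : CompleteSpace U.KP := (U.Ku).isClosed_orthogonal.completeSpace_coe

/-- The orthogonal projection `P_u : L² → K_u` (viewed as an operator on `L²`). -/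
def Pu : L2 →L[ℂ] L2 := (U.Ku).subtypeL ∘L Submodule.orthogonalProjectionOnto U.Ku

/-- The dual of the compressed shift: `D_u = (I − P_u) M_z |_{K_u^⊥}`. -/
def Du : U.KP →L[ℂ] U.KP :=
  Submodule.orthogonalProjectionOnto U.KP ∘L Mz ∘L (U.KP).subtypeL

/-- The conjugation `C_u f = u · conj(z f)` on `L²`. -/
def C (f : L2) : L2 := U.M (conjL2 (Mz f))

/-- The reproducing kernel of `K_u` at `0`: `k₀ᵘ = 1 − conj(u(0))·u`. -/
def k0 : L2 := oneL2 - (starRingEnd ℂ) U.a0 • U.toL2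

/-- The similarity `V_u = P⁻ + (conj u/conj u(0)) P⁺` of the paper. -/
def V : L2 →L[ℂ] L2 := Pm + ((starRingEnd ℂ) U.a0)⁻¹ • (U.Mc ∘L Pp)

/-- The inverse similarity `V_u⁻¹ = P⁻ + conj(u(0)) u P⁺`. -/
def Vinv : L2 →L[ℂ] L2 := Pm + (starRingEnd ℂ) U.a0 • (U.M ∘L Pp)

end InnerData

lemma Mz_mem_H2 {f : L2} (hf : f ∈ H2) : Mz f ∈ H2 := by
  intro n hn
  rw [fourierBasis_repr]
  have hcoe : (Mz f : AddCircle T → ℂ) =ᵐ[μ] fun x => zfun x * (f : AddCircle T → ℂ) x :=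
    MemLp.coeFn_toLp (memLp_mul zfun_meas zfun_norm f)
  have h1 : fourierCoeff (Mz f : AddCircle T → ℂ) n
      = fourierCoeff (f : AddCircle T → ℂ) (n - 1) := by
    unfold fourierCoeff
    rw [integral_congr_ae (by filter_upwards [hcoe] with x hx; rw [hx])]
    refine integral_congr_ae ?_
    filter_upwards with x
    have : fourier (-n) x * zfun x = fourier (-(n - 1)) x := by
      unfold zfun
      rw [show (-(n - 1) : ℤ) = -n + 1 by ring, fourier_add]
    simp only [smul_eq_mul]
    calc fourier (-n) x * (zfun x * (f : AddCircle T → ℂ) x)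
        = (fourier (-n) x * zfun x) * (f : AddCircle T → ℂ) x := by ring
      _ = fourier (-(n - 1)) x * (f : AddCircle T → ℂ) x := by rw [this]
  rw [h1]
  have := hf (n - 1) (by omega)
  rwa [fourierBasis_repr] at this

/-- The unilateral shift `S` on `H²`. -/
def Shift : H2 →L[ℂ] H2 :=
  (Mz ∘L H2.subtypeL).codRestrict H2 (fun x => Mz_mem_H2 x.2)

local notation "⟪" x ", " y "⟫" => @inner ℂ _ _ x y

lemma mulCLM_coeFn (u : AddCircle T → ℂ) (hm : AEStronglyMeasurable u μ)
    (hb : ∀ᵐ x ∂μ, ‖u x‖ ≤ 1) (f : L2) :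
    (mulCLM u hm hb f : AddCircle T → ℂ) =ᵐ[μ] fun x => u x * (f : AddCircle T → ℂ) x :=
  MemLp.coeFn_toLp (memLp_mul hm hb f)

lemma conjL2_coeFn (f : L2) :
    (conjL2 f : AddCircle T → ℂ) =ᵐ[μ] fun x => (starRingEnd ℂ) ((f : AddCircle T → ℂ) x) :=
  MemLp.coeFn_toLp _

lemma oneL2_coeFn : (oneL2 : AddCircle T → ℂ) =ᵐ[μ] fun _ => (1 : ℂ) :=
  MemLp.coeFn_toLp _

lemma toL2_coeFn (U : InnerData) : (U.toL2 : AddCircle T → ℂ) =ᵐ[μ] U.u :=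
  MemLp.coeFn_toLp _

lemma inner_L2 (f g : L2) :
    ⟪f, g⟫ = ∫ x, (starRingEnd ℂ) ((f : AddCircle T → ℂ) x) * (g : AddCircle T → ℂ) x ∂μ := by
  rw [MeasureTheory.L2.inner_def]
  simp_rw [RCLike.inner_apply]
  exact integral_congr_ae (Filter.Eventually.of_forall fun x => mul_comm _ _)

lemma fourierCoeff_congr {f g : AddCircle T → ℂ} (h : f =ᵐ[μ] g) (n : ℤ) :
    fourierCoeff f n = fourierCoeff g n := by
  unfold fourierCoeff
  exact integral_congr_ae (h.mono fun x hx => by simp only [hx])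

lemma zfun_unim (x : AddCircle T) : zfun x * (starRingEnd ℂ) (zfun x) = 1 := by
  have h : ‖zfun x‖ = 1 := by simp [zfun, Circle.norm_coe]
  rw [Complex.mul_conj]
  norm_cast
  rw [show Complex.normSq (zfun x) = ‖zfun x‖ ^ 2 from (Complex.sq_norm _).symm, h]
  norm_num


lemma Mz_coeFn (f : L2) :
    (Mz f : AddCircle T → ℂ) =ᵐ[μ] fun x => zfun x * (f : AddCircle T → ℂ) x :=
  mulCLM_coeFn _ _ _ f

lemma Mzbar_coeFn (f : L2) :
    (Mzbar f : AddCircle T → ℂ)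
      =ᵐ[μ] fun x => (starRingEnd ℂ) (zfun x) * (f : AddCircle T → ℂ) x :=
  mulCLM_coeFn _ _ _ f

lemma M_coeFn (U : InnerData) (f : L2) :
    (U.M f : AddCircle T → ℂ) =ᵐ[μ] fun x => U.u x * (f : AddCircle T → ℂ) x :=
  mulCLM_coeFn _ _ _ f

lemma Mc_coeFn (U : InnerData) (f : L2) :
    (U.Mc f : AddCircle T → ℂ)
      =ᵐ[μ] fun x => (starRingEnd ℂ) (U.u x) * (f : AddCircle T → ℂ) x :=
  mulCLM_coeFn _ _ _ f

lemma fourierCoeff_fourier_mul (m : ℤ) (f : AddCircle T → ℂ) (n : ℤ) :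
    fourierCoeff (fun x => fourier m x * f x) n = fourierCoeff f (n - m) := by
  unfold fourierCoeff
  refine integral_congr_ae (Filter.Eventually.of_forall fun x => ?_)
  simp only [smul_eq_mul]
  rw [← mul_assoc, show fourier (-n) x * fourier m x = fourier (-n + m) x from
    (fourier_add).symm ▸ rfl, show (-n + m : ℤ) = -(n - m) by ring]

lemma repr_Mz (f : L2) (n : ℤ) :
    fourierBasis.repr (Mz f) n = fourierBasis.repr f (n - 1) := by
  rw [fourierBasis_repr, fourierBasis_repr,
    fourierCoeff_congr (Mz_coeFn f) n]
  exact fourierCoeff_fourier_mul 1 _ n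

lemma repr_Mzbar (f : L2) (n : ℤ) :
    fourierBasis.repr (Mzbar f) n = fourierBasis.repr f (n + 1) := by
  rw [fourierBasis_repr, fourierBasis_repr,
    fourierCoeff_congr (Mzbar_coeFn f) n]
  have h : (fun x => (starRingEnd ℂ) (zfun x) * (f : AddCircle T → ℂ) x)
      = fun x => fourier (-1 : ℤ) x * (f : AddCircle T → ℂ) x := by
    funext x
    rw [show fourier (-1 : ℤ) x = (starRingEnd ℂ) (fourier 1 x) from fourier_neg]
    rfl
  rw [h, fourierCoeff_fourier_mul (-1) _ n, show (n - -1 : ℤ) = n + 1 by ring]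

lemma repr_conjL2 (f : L2) (n : ℤ) :
    fourierBasis.repr (conjL2 f) n = (starRingEnd ℂ) (fourierBasis.repr f (-n)) := by
  rw [fourierBasis_repr, fourierBasis_repr,
    fourierCoeff_congr (conjL2_coeFn f) n]
  unfold fourierCoeff
  rw [← integral_conj]
  refine integral_congr_ae (Filter.Eventually.of_forall fun x => ?_)
  simp only [smul_eq_mul, map_mul]
  rw [show ((starRingEnd ℂ) (fourier (-(-n)) x) : ℂ) = fourier (-n) x by
    rw [show (-(-n) : ℤ) = n from neg_neg n, ← fourier_neg]]

lemma integral_fourier (n : ℤ) :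
    ∫ x, fourier n x ∂μ = if n = 0 then 1 else 0 := by
  split_ifs with h
  · subst h
    simp only [fourier_zero]
    simp
  · have h0 := (orthonormal_fourier (T := T))
    rw [orthonormal_iff_ite] at h0
    have h1 := h0 0 n
    rw [if_neg (fun hh => h hh.symm)] at h1
    rw [MeasureTheory.L2.inner_def] at h1
    rw [← h1]
    refine integral_congr_ae ?_
    filter_upwards [coeFn_fourierLp (T := T) 2 (0 : ℤ), coeFn_fourierLp (T := T) 2 n]
      with x h2 h3
    rw [RCLike.inner_apply, h2, h3, fourier_zero, map_one, mul_one]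

lemma repr_oneL2 (n : ℤ) :
    fourierBasis.repr oneL2 n = if n = 0 then 1 else 0 := by
  rw [fourierBasis_repr, fourierCoeff_congr oneL2_coeFn]
  unfold fourierCoeff
  simp_rw [smul_eq_mul, mul_one]
  rw [integral_fourier (-n)]
  simp [neg_eq_zero]

lemma oneL2_mem_H2 : oneL2 ∈ H2 := by
  intro n hn
  rw [repr_oneL2, if_neg (by omega)]

lemma toL2_repr (U : InnerData) (n : ℤ) :
    fourierBasis.repr U.toL2 n = fourierCoeff U.u n := by
  rw [fourierBasis_repr]
  exact fourierCoeff_congr (toL2_coeFn U) n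

lemma toL2_mem_H2 (U : InnerData) : U.toL2 ∈ H2 := by
  intro n hn
  rw [toL2_repr]
  exact U.anal n hn

lemma inner_eq_tsum_repr (f g : L2) :
    ⟪f, g⟫ = ∑' n : ℤ, (starRingEnd ℂ) (fourierBasis.repr f n) * fourierBasis.repr g n := by
  rw [← fourierBasis.repr.inner_map_map f g, lp.inner_eq_tsum]
  exact tsum_congr fun n => (RCLike.inner_apply _ _).trans (mul_comm _ _)

lemma inner_Hm_H2 {q h : L2} (hq : q ∈ Hm) (hh : h ∈ H2) : ⟪q, h⟫ = 0 := by
  rw [inner_eq_tsum_repr]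
  convert tsum_zero with n
  rcases lt_or_ge n 0 with h1 | h1
  · rw [hh n h1, mul_zero]
  · rw [hq n h1, map_zero, zero_mul]

lemma inner_H2_Hm {h q : L2} (hh : h ∈ H2) (hq : q ∈ Hm) : ⟪h, q⟫ = 0 := by
  rw [← inner_conj_symm, inner_Hm_H2 hq hh, map_zero]

lemma Mz_adjoint : ContinuousLinearMap.adjoint Mz = Mzbar := by
  symm
  rw [ContinuousLinearMap.eq_adjoint_iff]
  intro x y
  rw [inner_L2, inner_L2]
  refine integral_congr_ae ?_
  filter_upwards [Mzbar_coeFn x, Mz_coeFn y] with t h1 h2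
  rw [h1, h2]
  simp only [map_mul, Complex.conj_conj]
  ring

lemma M_adjoint (U : InnerData) : ContinuousLinearMap.adjoint U.M = U.Mc := by
  symm
  rw [ContinuousLinearMap.eq_adjoint_iff]
  intro x y
  rw [inner_L2, inner_L2]
  refine integral_congr_ae ?_
  filter_upwards [Mc_coeFn U x, M_coeFn U y] with t h1 h2
  rw [h1, h2]
  simp only [map_mul, Complex.conj_conj]
  ring

lemma inner_Mzbar_left (x y : L2) : ⟪Mzbar x, y⟫ = ⟪x, Mz y⟫ := by
  rw [← Mz_adjoint]
  exact ContinuousLinearMap.adjoint_inner_left Mz y x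

lemma inner_Mzbar_right (x y : L2) : ⟪x, Mzbar y⟫ = ⟪Mz x, y⟫ := by
  rw [← Mz_adjoint]
  exact ContinuousLinearMap.adjoint_inner_right Mz x y

lemma inner_M_left (U : InnerData) (x y : L2) : ⟪U.M x, y⟫ = ⟪x, U.Mc y⟫ := by
  rw [← M_adjoint U]
  exact (ContinuousLinearMap.adjoint_inner_right U.M x y).symm

lemma inner_oneL2 (f : L2) : ⟪oneL2, f⟫ = fourierBasis.repr f 0 := by
  rw [inner_L2, fourierBasis_repr]
  unfold fourierCoeff
  refine integral_congr_ae ?_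
  filter_upwards [oneL2_coeFn] with x hx
  rw [hx]
  simp

lemma Mz_Mzbar (f : L2) : Mz (Mzbar f) = f := by
  apply Lp.ext
  filter_upwards [Mz_coeFn (Mzbar f), Mzbar_coeFn f] with x hx1 hx2
  rw [hx1, hx2, ← mul_assoc, zfun_unim x, one_mul]

lemma M_oneL2 (U : InnerData) : U.M oneL2 = U.toL2 := by
  apply Lp.ext
  filter_upwards [M_coeFn U oneL2, oneL2_coeFn, toL2_coeFn U] with x h1 h2 h3
  rw [h1, h3, h2, mul_one]

lemma mul_conj_of_norm_one {z : ℂ} (h : ‖z‖ = 1) : z * (starRingEnd ℂ) z = 1 := by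
  rw [Complex.mul_conj]
  norm_cast
  rw [show Complex.normSq z = ‖z‖ ^ 2 from (Complex.sq_norm _).symm, h]
  norm_num

lemma unim_mul (U : InnerData) : ∀ᵐ x ∂μ, U.u x * (starRingEnd ℂ) (U.u x) = 1 := by
  filter_upwards [U.unim] with x hx
  exact mul_conj_of_norm_one hx

lemma inner_Mz_Mz (f g : L2) : ⟪Mz f, Mz g⟫ = ⟪f, g⟫ := by
  rw [inner_L2, inner_L2]
  refine integral_congr_ae ?_
  filter_upwards [Mz_coeFn f, Mz_coeFn g] with x h1 h2
  rw [h1, h2, map_mul]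
  linear_combination ((starRingEnd ℂ) ((f : AddCircle T → ℂ) x) * (g : AddCircle T → ℂ) x)
    * zfun_unim x

lemma inner_M_M (U : InnerData) (f g : L2) : ⟪U.M f, U.M g⟫ = ⟪f, g⟫ := by
  rw [inner_L2, inner_L2]
  refine integral_congr_ae ?_
  filter_upwards [M_coeFn U f, M_coeFn U g, unim_mul U] with x h1 h2 h3
  rw [h1, h2, map_mul]
  linear_combination ((starRingEnd ℂ) ((f : AddCircle T → ℂ) x) * (g : AddCircle T → ℂ) x) * h3

lemma M_Mz_comm (U : InnerData) (f : L2) : U.M (Mz f) = Mz (U.M f) := by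
  apply Lp.ext
  filter_upwards [M_coeFn U (Mz f), Mz_coeFn f, Mz_coeFn (U.M f), M_coeFn U f]
    with x h1 h2 h3 h4
  rw [h1, h2, h3, h4]
  ring

lemma k0_coeFn (U : InnerData) :
    (U.k0 : AddCircle T → ℂ) =ᵐ[μ] fun x => 1 - (starRingEnd ℂ) U.a0 * U.u x := by
  have h : U.k0 = oneL2 - (starRingEnd ℂ) U.a0 • U.toL2 := rfl
  rw [h]
  filter_upwards [Lp.coeFn_sub oneL2 ((starRingEnd ℂ) U.a0 • U.toL2),
    Lp.coeFn_smul ((starRingEnd ℂ) U.a0) U.toL2, oneL2_coeFn, toL2_coeFn U]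
    with x h1 h2 h3 h4
  rw [h1, Pi.sub_apply, h2, Pi.smul_apply, h3, h4, smul_eq_mul]

lemma C_k0_coeFn (U : InnerData) :
    (U.C U.k0 : AddCircle T → ℂ)
      =ᵐ[μ] fun x => (starRingEnd ℂ) (zfun x) * (U.u x - U.a0) := by
  have h : U.C U.k0 = U.M (conjL2 (Mz U.k0)) := rfl
  rw [h]
  filter_upwards [M_coeFn U (conjL2 (Mz U.k0)), conjL2_coeFn (Mz U.k0), Mz_coeFn U.k0,
    k0_coeFn U, unim_mul U] with x h1 h2 h3 h4 h5
  rw [h1, h2, h3, h4]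
  simp only [map_mul, map_sub, map_one, Complex.conj_conj]
  linear_combination (-U.a0 * (starRingEnd ℂ) (zfun x)) * h5

lemma C_k0_eq (U : InnerData) : U.C U.k0 = Mzbar U.toL2 - U.a0 • Mzbar oneL2 := by
  apply Lp.ext
  filter_upwards [C_k0_coeFn U, Lp.coeFn_sub (Mzbar U.toL2) (U.a0 • Mzbar oneL2),
    Lp.coeFn_smul U.a0 (Mzbar oneL2), Mzbar_coeFn U.toL2, Mzbar_coeFn oneL2,
    toL2_coeFn U, oneL2_coeFn] with x h1 h2 h3 h4 h5 h6 h7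
  rw [h1, h2, Pi.sub_apply, h3, Pi.smul_apply, h4, h5, h6, h7, smul_eq_mul]
  ring

lemma mem_uH2_orthogonal_iff (U : InnerData) {x : L2} :
    x ∈ (U.uH2)ᗮ ↔ ∀ h ∈ H2, ⟪U.M h, x⟫ = 0 := by
  rw [Submodule.mem_orthogonal]
  constructor
  · intro hx h hh
    exact hx _ ⟨h, hh, rfl⟩
  · rintro hx v ⟨h, hh, rfl⟩
    exact hx h hh

lemma Mzbar_oneL2_mem_Hm : Mzbar oneL2 ∈ Hm := by
  intro n hn
  rw [repr_Mzbar, repr_oneL2, if_neg (by omega)]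

lemma conjL2_Mz_toL2_mem_Hm (U : InnerData) : conjL2 (Mz U.toL2) ∈ Hm := by
  intro n hn
  rw [repr_conjL2, repr_Mz, toL2_repr, U.anal (-n - 1) (by omega), map_zero]

lemma Ck0_mem_Ku (U : InnerData) : U.C U.k0 ∈ U.Ku := by
  refine Submodule.mem_inf.mpr ⟨?_, ?_⟩
  · intro n hn
    rw [C_k0_eq, map_sub, _root_.map_smul, lp.coeFn_sub, Pi.sub_apply, lp.coeFn_smul, Pi.smul_apply,
      repr_Mzbar, repr_Mzbar, toL2_repr, repr_oneL2, smul_eq_mul]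
    rcases eq_or_lt_of_le (by omega : n + 1 ≤ 0) with h | h
    · rw [h, if_pos rfl, mul_one, show fourierCoeff U.u 0 = U.a0 from rfl, sub_self]
    · rw [U.anal (n + 1) h, if_neg (by omega), mul_zero, sub_zero]
  · rw [mem_uH2_orthogonal_iff]
    intro h hh
    rw [inner_M_left]
    have h1 : U.Mc (U.C U.k0) = Mzbar oneL2 - U.a0 • conjL2 (Mz U.toL2) := by
      apply Lp.ext
      filter_upwards [Mc_coeFn U (U.C U.k0), C_k0_coeFn U,
        Lp.coeFn_sub (Mzbar oneL2) (U.a0 • conjL2 (Mz U.toL2)),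
        Lp.coeFn_smul U.a0 (conjL2 (Mz U.toL2)), Mzbar_coeFn oneL2, oneL2_coeFn,
        conjL2_coeFn (Mz U.toL2), Mz_coeFn U.toL2, toL2_coeFn U, unim_mul U]
        with x h1 h2 h3 h4 h5 h6 h7 h8 h9 h10
      rw [h1, h2, h3, Pi.sub_apply, h4, Pi.smul_apply, h5, h6, h7, h8, h9, smul_eq_mul]
      simp only [map_mul, map_sub, Complex.conj_conj]
      linear_combination ((starRingEnd ℂ) (zfun x)) * h10
    rw [h1, inner_sub_right, inner_smul_right,
      inner_H2_Hm hh Mzbar_oneL2_mem_Hm, inner_H2_Hm hh (conjL2_Mz_toL2_mem_Hm U),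
      mul_zero, sub_zero]

lemma c_formula (U : InnerData) {k : L2} (hk : k ∈ H2) :
    ⟪U.C U.k0, k⟫ = ⟪U.toL2, Mz k⟫ := by
  rw [C_k0_eq, inner_sub_left, inner_smul_left, inner_Mzbar_left, inner_Mzbar_left,
    inner_oneL2, repr_Mz, hk (0 - 1) (by omega), mul_zero, sub_zero]

lemma key_mem_Ku (U : InnerData) {k : L2} (hk : k ∈ U.Ku) :
    Mz k - ⟪U.C U.k0, k⟫ • U.toL2 ∈ U.Ku := by
  obtain ⟨hk1, hk2⟩ := Submodule.mem_inf.mp hk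
  refine Submodule.mem_inf.mpr ⟨?_, ?_⟩
  · exact H2.sub_mem (Mz_mem_H2 hk1) (H2.smul_mem _ (toL2_mem_H2 U))
  · rw [mem_uH2_orthogonal_iff]
    intro h hh
    set c0 := fourierBasis.repr h 0 with hc0
    set h₁ := Mzbar (h - c0 • oneL2) with hh₁def
    have hMzh₁ : Mz h₁ = h - c0 • oneL2 := Mz_Mzbar _
    have hdecomp : h = c0 • oneL2 + Mz h₁ := by
      rw [hMzh₁]; abel
    have hh₁ : h₁ ∈ H2 := by
      intro n hn
      rw [hh₁def, repr_Mzbar, map_sub, _root_.map_smul, lp.coeFn_sub, Pi.sub_apply,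
        lp.coeFn_smul, Pi.smul_apply, repr_oneL2, smul_eq_mul]
      rcases eq_or_lt_of_le (by omega : n + 1 ≤ 0) with h' | h'
      · rw [h', if_pos rfl, mul_one, hc0, sub_self]
      · rw [hh (n + 1) h', if_neg (by omega), mul_zero, sub_zero]
    have horth : ⟪U.M h₁, k⟫ = 0 :=
      (Submodule.mem_orthogonal _ k).mp hk2 _ ⟨h₁, hh₁, rfl⟩
    have e1 : ⟪U.M h, Mz k⟫ = (starRingEnd ℂ) c0 * ⟪U.toL2, Mz k⟫ := by
      rw [hdecomp, map_add, _root_.map_smul, inner_add_left, inner_smul_left, M_oneL2,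
        M_Mz_comm, inner_Mz_Mz, horth, add_zero]
    have t1 : ⟪U.M oneL2, U.toL2⟫ = 1 := by
      rw [← M_oneL2 U, inner_M_M, inner_oneL2, repr_oneL2, if_pos rfl]
    have t2 : ⟪U.M (Mz h₁), U.toL2⟫ = 0 := by
      rw [← M_oneL2 U, inner_M_M, ← inner_conj_symm, inner_oneL2, repr_Mz,
        hh₁ (0 - 1) (by omega), map_zero]
    have e2 : ⟪U.M h, U.toL2⟫ = (starRingEnd ℂ) c0 := by
      rw [hdecomp, map_add, _root_.map_smul, inner_add_left, inner_smul_left, t1, t2,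
        mul_one, add_zero]
    rw [inner_sub_right, inner_smul_right, e1, e2, c_formula U hk1]
    ring

lemma coeff0_Pp (U : InnerData) (f : L2) :
    fourierCoeff ((Pp (U.Mc f)) : AddCircle T → ℂ) 0 = ⟪U.toL2, f⟫ := by
  rw [← fourierBasis_repr, ← inner_oneL2]
  have hp : ⟪oneL2, Pp (U.Mc f)⟫ = ⟪oneL2, U.Mc f⟫ := by
    have hx : U.Mc f - Pp (U.Mc f) ∈ H2ᗮ :=
      Submodule.sub_starProjection_mem_orthogonal (K := H2) (U.Mc f)
    have h0 : ⟪oneL2, U.Mc f - Pp (U.Mc f)⟫ = 0 :=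
      (Submodule.mem_orthogonal H2 _).mp hx oneL2 oneL2_mem_H2
    rw [inner_sub_right, sub_eq_zero] at h0
    exact h0.symm
  rw [hp, inner_L2, inner_L2]
  refine integral_congr_ae ?_
  filter_upwards [oneL2_coeFn, Mc_coeFn U f, toL2_coeFn U] with x h1 h2 h3
  rw [h1, h2, h3, map_one, one_mul]

/-- `D_u^* f = conj(z) f − g(0)·C_u k₀ᵘ` where `g = P⁺(conj(u) f)`;
in particular `D_u^*` restricted to `conj(H²₀)` is multiplication by `conj z`, which maps
`conj(H²₀)` into itself. -/
theorem Du_adjoint_formula (U : InnerData) :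
    (∀ f : U.KP,
      ((ContinuousLinearMap.adjoint U.Du) f : L2)
        = Mzbar (f : L2)
          - fourierCoeff ((Pp (U.Mc (f : L2))) : AddCircle T → ℂ) 0 • U.C U.k0) ∧
    (∀ f : U.KP, (f : L2) ∈ Hm →
      ((ContinuousLinearMap.adjoint U.Du) f : L2) = Mzbar (f : L2)) ∧
    (∀ f : U.KP, (f : L2) ∈ Hm →
      ((ContinuousLinearMap.adjoint U.Du) f : L2) ∈ Hm) := by
  have hadj : ∀ f : U.KP, ((ContinuousLinearMap.adjoint U.Du) f : L2)
      = (Submodule.orthogonalProjectionOnto U.KP (Mzbar (f : L2)) : L2) := by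
    intro f
    have h0 : U.Du = Submodule.orthogonalProjectionOnto U.KP ∘L (Mz ∘L U.KP.subtypeL) := rfl
    have h1 : ContinuousLinearMap.adjoint U.Du
        = (Submodule.orthogonalProjectionOnto U.KP ∘L Mzbar) ∘L U.KP.subtypeL := by
      rw [h0, ContinuousLinearMap.adjoint_comp, ContinuousLinearMap.adjoint_comp,
        Submodule.adjoint_orthogonalProjection, Submodule.adjoint_subtypeL, Mz_adjoint]
    rw [h1]
    rfl
  have hmain : ∀ f : U.KP,
      ((ContinuousLinearMap.adjoint U.Du) f : L2)
        = Mzbar (f : L2) - (⟪U.toL2, (f : L2)⟫) • U.C U.k0 := by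
    intro f
    rw [hadj f]
    show U.KP.starProjection (Mzbar (f : L2)) = _
    refine Submodule.eq_starProjection_of_mem_orthogonal ?_ ?_
    · show _ ∈ (U.Ku)ᗮ
      rw [Submodule.mem_orthogonal]
      intro k hk
      rw [inner_sub_right, inner_smul_right, inner_Mzbar_right]
      have hw := key_mem_Ku U hk
      have h2 : ⟪Mz k - ⟪U.C U.k0, k⟫ • U.toL2, (f : L2)⟫ = 0 :=
        (Submodule.mem_orthogonal U.Ku (f : L2)).mp f.2 _ hw
      rw [inner_sub_left, inner_smul_left, sub_eq_zero] at h2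
      rw [h2, inner_conj_symm]
      ring
    · have h3 : Mzbar (f : L2) - (Mzbar (f : L2) - (⟪U.toL2, (f : L2)⟫) • U.C U.k0)
          = (⟪U.toL2, (f : L2)⟫) • U.C U.k0 := by abel
      rw [h3]
      show _ ∈ ((U.Ku)ᗮ)ᗮ
      rw [Submodule.orthogonal_orthogonal]
      exact Submodule.smul_mem _ _ (Ck0_mem_Ku U)
  refine ⟨?_, ?_, ?_⟩
  · intro f
    rw [hmain f, coeff0_Pp U (f : L2)]
  · intro f hf
    rw [hmain f, inner_H2_Hm (toL2_mem_H2 U) hf, zero_smul, sub_zero]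
  · intro f hf
    rw [hmain f, inner_H2_Hm (toL2_mem_H2 U) hf, zero_smul, sub_zero]
    intro n hn
    rw [repr_Mzbar]
    exact hf (n + 1) (by omega)

end Paper
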